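/- arXiv:1604.03224 — 4 statements merged into one kernel-verified Lean document; each statement's English description precedes it below -/
import Mathlib

section
/- Let L, M be positive integers and N = L·M. Assume λ is multiplicative, that λ(p)² = 1/p for every prime p with p | M and p² ∤ M, that λ(p) = 0 for every prime p with p² | M, and that ρ(p) > 0 for every prime p with p | L and p ∤ M. Then Σ_{d | L} ξ_d(1)² = ∏_{p prime, p | L, p ∤ M} ρ(p)^{-1} · ∏_{p prime, p² | N, p² ∤ M} p²/(p² − 1). -/
open scoped BigOperators
open Finset

noncomputable section

/-- A multiplicative arithmetic function: `λ(1) = 1` and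
`λ(ab) = λ(a)λ(b)` whenever `gcd(a,b) = 1`. -/
def IsMult (lam : ℕ → ℝ) : Prop :=
  lam 1 = 1 ∧ ∀ a b : ℕ, Nat.Coprime a b → lam (a * b) = lam a * lam b

/-- The trivial character mod `M`: `χ(n) = 1` if `gcd(n,M) = 1`, else `0`. -/
def chi (M n : ℕ) : ℝ := if Nat.gcd n M = 1 then 1 else 0

/-- `σ(b) = Σ_{r | b} χ(r)/r` (twisted divisor sum). -/
def sigTw (M b : ℕ) : ℝ := ∑ r ∈ b.divisors, chi M r / r

/-- `r(c) = Σ_{b | c} μ(b)λ(b)² / (b σ(b)²)`. -/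
def rF (M : ℕ) (lam : ℕ → ℝ) (c : ℕ) : ℝ :=
  ∑ b ∈ c.divisors,
    (ArithmeticFunction.moebius b : ℝ) * (lam b) ^ 2 / (b * (sigTw M b) ^ 2)

/-- `α(c) = Σ_{b | c} χ(b)μ(b)/b²`. -/
def alphaF (M c : ℕ) : ℝ :=
  ∑ b ∈ c.divisors, chi M b * (ArithmeticFunction.moebius b : ℝ) / (b : ℝ) ^ 2

/-- `β(c) = Σ_{b | c} χ(b)μ(b)²/b`. -/
def betaF (M c : ℕ) : ℝ :=
  ∑ b ∈ c.divisors, chi M b * (ArithmeticFunction.moebius b : ℝ) ^ 2 / b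

/-- The multiplicative function `μ_λ` determined by `μ_λ(p) = -λ(p)`,
`μ_λ(p²) = χ(p)`, `μ_λ(p^j) = 0` for `j ≥ 3`. -/
def muLam (M : ℕ) (lam : ℕ → ℝ) (d : ℕ) : ℝ :=
  ∏ p ∈ d.primeFactors,
    (if d.factorization p = 1 then -lam p
     else if d.factorization p = 2 then chi M p else 0)

/-- The squarefree part `d₁` of `d`. -/
def sfPart (d : ℕ) : ℕ :=
  ∏ p ∈ d.primeFactors, if d.factorization p = 1 then p else 1

/-- The squarefull part `d₂` of `d`. -/
def ffPart (d : ℕ) : ℕ :=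
  ∏ p ∈ d.primeFactors, if d.factorization p = 1 then 1 else p ^ d.factorization p

/-- `ξ'_{d₁}(g) = μ(d₁/g)λ(d₁/g) / (r(d₁)^{1/2} (d₁/g)^{1/2} β(d₁/g))` for `g ∣ d₁`. -/
def xi' (M : ℕ) (lam : ℕ → ℝ) (d₁ g : ℕ) : ℝ :=
  (ArithmeticFunction.moebius (d₁ / g) : ℝ) * lam (d₁ / g) /
    (Real.sqrt (rF M lam d₁) * Real.sqrt ((d₁ / g : ℕ) : ℝ) * betaF M (d₁ / g))

/-- `ξ''_{d₂}(g) = μ_λ(d₂/g) / ((d₂/g)^{1/2} (r(d₂)α(d₂))^{1/2})` for `g ∣ d₂`. -/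
def xi'' (M : ℕ) (lam : ℕ → ℝ) (d₂ g : ℕ) : ℝ :=
  muLam M lam (d₂ / g) /
    (Real.sqrt ((d₂ / g : ℕ) : ℝ) * Real.sqrt (rF M lam d₂ * alphaF M d₂))

/-- `ξ_d(ℓ) = ξ'_{d₁}(gcd(d₁,ℓ)) ξ''_{d₂}(gcd(d₂,ℓ))`. -/
def xi (M : ℕ) (lam : ℕ → ℝ) (d ℓ : ℕ) : ℝ :=
  xi' M lam (sfPart d) (Nat.gcd (sfPart d) ℓ) *
    xi'' M lam (ffPart d) (Nat.gcd (ffPart d) ℓ)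

/-- `ρ(p) = 1 - p (λ(p)/(p+1))²`. -/
def rho (lam : ℕ → ℝ) (p : ℕ) : ℝ := 1 - p * (lam p / (p + 1)) ^ 2


private def AFof (h : ℕ → ℝ) : ArithmeticFunction ℝ := ⟨fun n => if n = 0 then 0 else h n, if_pos rfl⟩

lemma AFof_apply (h : ℕ → ℝ) {n : ℕ} (hn : n ≠ 0) : AFof h n = h n := if_neg hn

lemma AFof_mult {h : ℕ → ℝ} (h1 : h 1 = 1)
    (hm : ∀ m n, Nat.Coprime m n → h (m*n) = h m * h n) :
    (AFof h).IsMultiplicative := by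
  constructor
  · simpa [AFof] using h1
  · intro m n hmn
    rcases eq_or_ne m 0 with rfl | hm0
    · simp [AFof]
    rcases eq_or_ne n 0 with rfl | hn0
    · simp [AFof]
    simp only [AFof, ArithmeticFunction.coe_mk, if_neg hm0, if_neg hn0,
      if_neg (Nat.mul_ne_zero hm0 hn0)]
    exact hm m n hmn

lemma zeta_AF_apply (h : ℕ → ℝ) (n : ℕ) :
    (((ArithmeticFunction.zeta : ArithmeticFunction ℕ) : ArithmeticFunction ℝ) * AFof h) n
      = ∑ d ∈ n.divisors, h d := by
  rw [ArithmeticFunction.coe_zeta_mul_apply]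
  exact Finset.sum_congr rfl fun d hd => AFof_apply h (Nat.pos_of_mem_divisors hd).ne'

lemma sum_divisors_mul_of_mult {h : ℕ → ℝ} (h1 : h 1 = 1)
    (hm : ∀ m n, Nat.Coprime m n → h (m*n) = h m * h n) {m n : ℕ} (hmn : Nat.Coprime m n) :
    ∑ d ∈ (m*n).divisors, h d = (∑ d ∈ m.divisors, h d) * ∑ d ∈ n.divisors, h d := by
  rw [← zeta_AF_apply, ← zeta_AF_apply, ← zeta_AF_apply,
    (ArithmeticFunction.isMultiplicative_zeta.natCast.mul (AFof_mult h1 hm)).map_mul_of_coprime hmn]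

lemma sum_divisors_eq_prod_primeFactors {h : ℕ → ℝ} (h1 : h 1 = 1)
    (hm : ∀ m n, Nat.Coprime m n → h (m*n) = h m * h n) {L : ℕ} (hL : L ≠ 0) :
    ∑ d ∈ L.divisors, h d
      = ∏ p ∈ L.primeFactors, ∑ j ∈ Finset.range (L.factorization p + 1), h (p ^ j) := by
  rw [← zeta_AF_apply,
    (ArithmeticFunction.isMultiplicative_zeta.natCast.mul (AFof_mult h1 hm)).multiplicative_factorization _ hL,
    Finsupp.prod]
  refine Finset.prod_congr L.support_factorization fun p hp => ?_
  have pp : p.Prime := Nat.prime_of_mem_primeFactors hp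
  rw [zeta_AF_apply, Nat.divisors_prime_pow pp, Finset.sum_map]
  rfl

lemma pfProd_mult {G : Type*} [CommMonoid G] (g : ℕ → ℕ → G) (m n : ℕ) (hmn : Nat.Coprime m n) :
    (∏ p ∈ (m*n).primeFactors, g p ((m*n).factorization p))
      = (∏ p ∈ m.primeFactors, g p (m.factorization p))
        * ∏ p ∈ n.primeFactors, g p (n.factorization p) := by
  rcases eq_or_ne m 0 with rfl | hm0
  · have : n = 1 := by simpa using hmn
    subst this; simp
  rcases eq_or_ne n 0 with rfl | hn0
  · have : m = 1 := by simpa [Nat.coprime_zero_right] using hmn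
    subst this; simp
  rw [Nat.primeFactors_mul hm0 hn0, Finset.prod_union hmn.disjoint_primeFactors]
  congr 1
  · refine Finset.prod_congr rfl fun p hp => ?_
    have h0 : n.factorization p = 0 := by
      have := Finset.disjoint_left.mp hmn.disjoint_primeFactors hp
      simpa [Nat.support_factorization] using Finsupp.notMem_support_iff.mp (by rwa [Nat.support_factorization])
    rw [Nat.factorization_mul hm0 hn0]; simp [h0]
  · refine Finset.prod_congr rfl fun p hp => ?_
    have h0 : m.factorization p = 0 := by
      have := Finset.disjoint_right.mp hmn.disjoint_primeFactors hp
      rw [← Nat.support_factorization] at this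
      exact Finsupp.notMem_support_iff.mp this
    rw [Nat.factorization_mul hm0 hn0]; simp [h0]

lemma pfProd_prime_pow {G : Type*} [CommMonoid G] (g : ℕ → ℕ → G) {p : ℕ} (pp : p.Prime)
    {k : ℕ} (hk : k ≠ 0) :
    (∏ q ∈ (p^k).primeFactors, g q ((p^k).factorization q)) = g p k := by
  rw [Nat.primeFactors_pow _ hk, pp.primeFactors]
  simp [pp.factorization_pow]
section Evals
variable (M : ℕ) (lam : ℕ → ℝ)

lemma chi_one : chi M 1 = 1 := by simp [chi]

lemma chi_mul (m n : ℕ) : chi M (m * n) = chi M m * chi M n := by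
  have h : Nat.gcd (m * n) M = 1 ↔ (Nat.gcd m M = 1 ∧ Nat.gcd n M = 1) :=
    Nat.coprime_mul_iff_left
  by_cases h1 : Nat.gcd m M = 1 <;> by_cases h2 : Nat.gcd n M = 1 <;>
    simp [chi, h, h1, h2]

lemma chi_of_dvd {p : ℕ} (hp : 2 ≤ p) (h : p ∣ M) : chi M p = 0 := by
  have : Nat.gcd p M ≠ 1 := by
    intro hg
    have := Nat.dvd_gcd dvd_rfl h
    rw [hg] at this
    have := Nat.le_of_dvd one_pos this
    omega
  simp [chi, this]

lemma chi_of_not_dvd {p : ℕ} (pp : p.Prime) (h : ¬ p ∣ M) : chi M p = 1 := by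
  have : Nat.gcd p M = 1 := (Nat.Prime.coprime_iff_not_dvd pp).mpr h
  simp [chi, this]

lemma sigTw_one : sigTw M 1 = 1 := by simp [sigTw, chi_one]

lemma sigTw_prime {p : ℕ} (pp : p.Prime) : sigTw M p = 1 + chi M p / p := by
  rw [sigTw, Nat.Prime.divisors pp, Finset.sum_pair pp.one_lt.ne]
  simp [chi_one]

lemma sigTw_mult (m n : ℕ) (hmn : Nat.Coprime m n) :
    sigTw M (m * n) = sigTw M m * sigTw M n := by
  refine sum_divisors_mul_of_mult ?_ ?_ hmn
  · simp [chi_one]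
  · intro a b _
    rw [chi_mul]
    push_cast
    ring

lemma sum_divisors_prime_pow_vanish {f : ℕ → ℝ} {p : ℕ} (pp : p.Prime) {k : ℕ} (hk : k ≠ 0)
    (hv : ∀ j, 2 ≤ j → f (p ^ j) = 0) :
    ∑ b ∈ (p ^ k).divisors, f b = f 1 + f p := by
  rw [Nat.divisors_prime_pow pp, Finset.sum_map]
  simp only [Function.Embedding.coeFn_mk]
  have hsub : ({0, 1} : Finset ℕ) ⊆ Finset.range (k + 1) := by
    intro x hx
    simp only [Finset.mem_insert, Finset.mem_singleton] at hx
    simp only [Finset.mem_range]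
    omega
  rw [← Finset.sum_subset hsub (fun j hj hnj => by
    refine hv j ?_
    simp only [Finset.mem_insert, Finset.mem_singleton] at hnj
    omega)]
  rw [Finset.sum_pair (by norm_num)]
  simp
end Evals
section Evals2
variable (M : ℕ) (lam : ℕ → ℝ)

lemma rF_one (hl : lam 1 = 1) : rF M lam 1 = 1 := by
  simp [rF, sigTw_one, hl]

lemma rF_mult (hl : IsMult lam) (m n : ℕ) (hmn : Nat.Coprime m n) :
    rF M lam (m * n) = rF M lam m * rF M lam n := by
  refine sum_divisors_mul_of_mult ?_ ?_ hmn
  · simp [sigTw_one, hl.1]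
  · intro a b hab
    rw [ArithmeticFunction.IsMultiplicative.map_mul_of_coprime
      ArithmeticFunction.isMultiplicative_moebius hab, hl.2 a b hab, sigTw_mult M a b hab]
    push_cast
    ring

lemma rF_prime_pow (hl : lam 1 = 1) {p : ℕ} (pp : p.Prime) {k : ℕ} (hk : k ≠ 0) :
    rF M lam (p ^ k) = 1 - lam p ^ 2 / (p * sigTw M p ^ 2) := by
  rw [rF, sum_divisors_prime_pow_vanish pp hk (fun j hj => by
    rw [ArithmeticFunction.moebius_apply_prime_pow pp (by omega)]
    simp [show j ≠ 1 by omega])]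
  rw [ArithmeticFunction.moebius_apply_prime pp]
  simp [sigTw_one, hl]
  ring

lemma alphaF_one : alphaF M 1 = 1 := by simp [alphaF, chi_one]

lemma alphaF_mult (m n : ℕ) (hmn : Nat.Coprime m n) :
    alphaF M (m * n) = alphaF M m * alphaF M n := by
  refine sum_divisors_mul_of_mult ?_ ?_ hmn
  · simp [chi_one]
  · intro a b hab
    rw [ArithmeticFunction.IsMultiplicative.map_mul_of_coprime
      ArithmeticFunction.isMultiplicative_moebius hab, chi_mul]
    push_cast
    ring

lemma alphaF_prime_pow {p : ℕ} (pp : p.Prime) {k : ℕ} (hk : k ≠ 0) :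
    alphaF M (p ^ k) = 1 - chi M p / (p : ℝ) ^ 2 := by
  rw [alphaF, sum_divisors_prime_pow_vanish pp hk (fun j hj => by
    rw [ArithmeticFunction.moebius_apply_prime_pow pp (by omega)]
    simp [show j ≠ 1 by omega])]
  rw [ArithmeticFunction.moebius_apply_prime pp]
  simp [chi_one]
  ring

lemma betaF_one : betaF M 1 = 1 := by simp [betaF, chi_one]

lemma betaF_mult (m n : ℕ) (hmn : Nat.Coprime m n) :
    betaF M (m * n) = betaF M m * betaF M n := by
  refine sum_divisors_mul_of_mult ?_ ?_ hmn
  · simp [chi_one]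
  · intro a b hab
    rw [ArithmeticFunction.IsMultiplicative.map_mul_of_coprime
      ArithmeticFunction.isMultiplicative_moebius hab, chi_mul]
    push_cast
    ring

lemma betaF_prime_pow {p : ℕ} (pp : p.Prime) {k : ℕ} (hk : k ≠ 0) :
    betaF M (p ^ k) = 1 + chi M p / p := by
  rw [betaF, sum_divisors_prime_pow_vanish pp hk (fun j hj => by
    rw [ArithmeticFunction.moebius_apply_prime_pow pp (by omega)]
    simp [show j ≠ 1 by omega])]
  rw [ArithmeticFunction.moebius_apply_prime pp]
  simp [chi_one]

lemma muLam_one : muLam M lam 1 = 1 := by simp [muLam]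

lemma muLam_mult (m n : ℕ) (hmn : Nat.Coprime m n) :
    muLam M lam (m * n) = muLam M lam m * muLam M lam n :=
  pfProd_mult (fun p k => if k = 1 then -lam p else if k = 2 then chi M p else 0) m n hmn

lemma muLam_prime_pow {p : ℕ} (pp : p.Prime) {k : ℕ} (hk : k ≠ 0) :
    muLam M lam (p ^ k) = if k = 1 then -lam p else if k = 2 then chi M p else 0 :=
  pfProd_prime_pow (fun p k => if k = 1 then -lam p else if k = 2 then chi M p else 0) pp hk

lemma sfPart_one : sfPart 1 = 1 := by simp [sfPart]

lemma sfPart_mult (m n : ℕ) (hmn : Nat.Coprime m n) :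
    sfPart (m * n) = sfPart m * sfPart n :=
  pfProd_mult (fun p k => if k = 1 then p else 1) m n hmn

lemma sfPart_prime_pow {p : ℕ} (pp : p.Prime) {k : ℕ} (hk : k ≠ 0) :
    sfPart (p ^ k) = if k = 1 then p else 1 :=
  pfProd_prime_pow (fun p k => if k = 1 then p else 1) pp hk

lemma ffPart_one : ffPart 1 = 1 := by simp [ffPart]

lemma ffPart_mult (m n : ℕ) (hmn : Nat.Coprime m n) :
    ffPart (m * n) = ffPart m * ffPart n :=
  pfProd_mult (fun p k => if k = 1 then 1 else p ^ k) m n hmn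

lemma ffPart_prime_pow {p : ℕ} (pp : p.Prime) {k : ℕ} (hk : k ≠ 0) :
    ffPart (p ^ k) = if k = 1 then 1 else p ^ k :=
  pfProd_prime_pow (fun p k => if k = 1 then 1 else p ^ k) pp hk

lemma sfPart_dvd (d : ℕ) : sfPart d ∣ d := by
  rcases eq_or_ne d 0 with rfl | hd
  · simp [sfPart]
  conv_rhs => rw [← Nat.factorization_prod_pow_eq_self hd]
  rw [Finsupp.prod, sfPart]
  rw [← Nat.support_factorization]
  refine Finset.prod_dvd_prod_of_dvd _ _ fun p hp => ?_
  split_ifs with h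
  · rw [h]; exact (pow_one p).symm ▸ dvd_rfl
  · exact one_dvd _

lemma ffPart_dvd (d : ℕ) : ffPart d ∣ d := by
  rcases eq_or_ne d 0 with rfl | hd
  · simp [ffPart]
  conv_rhs => rw [← Nat.factorization_prod_pow_eq_self hd]
  rw [Finsupp.prod, ffPart]
  rw [← Nat.support_factorization]
  refine Finset.prod_dvd_prod_of_dvd _ _ fun p hp => ?_
  split_ifs with h
  · exact one_dvd _
  · exact dvd_rfl

end Evals2
section Gsec
variable (M : ℕ) (lam : ℕ → ℝ)

def Afun (d : ℕ) : ℝ :=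
  ((ArithmeticFunction.moebius d : ℝ) * lam d) ^ 2 /
    (rF M lam d * d * (betaF M d) ^ 2)

def Bfun (d : ℕ) : ℝ :=
  (muLam M lam d) ^ 2 / ((d : ℝ) * (rF M lam d * alphaF M d))

def Gfun (d : ℕ) : ℝ := Afun M lam (sfPart d) * Bfun M lam (ffPart d)

lemma Afun_one (hl : lam 1 = 1) : Afun M lam 1 = 1 := by
  simp [Afun, rF_one M lam hl, betaF_one, hl]

lemma Bfun_one (hl : lam 1 = 1) : Bfun M lam 1 = 1 := by
  simp [Bfun, rF_one M lam hl, alphaF_one, muLam_one]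

lemma Gfun_one (hl : lam 1 = 1) : Gfun M lam 1 = 1 := by
  simp [Gfun, sfPart_one, ffPart_one, Afun_one M lam hl, Bfun_one M lam hl]

lemma Afun_mult (hl : IsMult lam) (m n : ℕ) (hmn : Nat.Coprime m n) :
    Afun M lam (m * n) = Afun M lam m * Afun M lam n := by
  unfold Afun
  rw [ArithmeticFunction.IsMultiplicative.map_mul_of_coprime
    ArithmeticFunction.isMultiplicative_moebius hmn, hl.2 m n hmn,
    rF_mult M lam hl m n hmn, betaF_mult M m n hmn]
  push_cast
  ring

lemma Bfun_mult (hl : IsMult lam) (m n : ℕ) (hmn : Nat.Coprime m n) :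
    Bfun M lam (m * n) = Bfun M lam m * Bfun M lam n := by
  unfold Bfun
  rw [muLam_mult M lam m n hmn, rF_mult M lam hl m n hmn, alphaF_mult M m n hmn]
  push_cast
  ring

lemma Gfun_mult (hl : IsMult lam) (m n : ℕ) (hmn : Nat.Coprime m n) :
    Gfun M lam (m * n) = Gfun M lam m * Gfun M lam n := by
  have h1 : Nat.Coprime (sfPart m) (sfPart n) :=
    Nat.Coprime.coprime_dvd_left (sfPart_dvd m)
      (Nat.Coprime.coprime_dvd_right (sfPart_dvd n) hmn)
  have h2 : Nat.Coprime (ffPart m) (ffPart n) :=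
    Nat.Coprime.coprime_dvd_left (ffPart_dvd m)
      (Nat.Coprime.coprime_dvd_right (ffPart_dvd n) hmn)
  unfold Gfun
  rw [sfPart_mult m n hmn, ffPart_mult m n hmn, Afun_mult M lam hl _ _ h1,
    Bfun_mult M lam hl _ _ h2]
  ring

lemma xi_sq_eq (d : ℕ) (h1 : 0 ≤ rF M lam (sfPart d))
    (h2 : 0 ≤ rF M lam (ffPart d) * alphaF M (ffPart d)) :
    (xi M lam d 1) ^ 2 = Gfun M lam d := by
  unfold xi xi' xi'' Gfun Afun Bfun
  rw [Nat.gcd_one_right, Nat.gcd_one_right, Nat.div_one, Nat.div_one]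
  simp only [mul_pow, div_pow]
  rw [Real.sq_sqrt h1, Real.sq_sqrt h2,
    Real.sq_sqrt (by positivity : (0:ℝ) ≤ ((sfPart d : ℕ) : ℝ)),
    Real.sq_sqrt (by positivity : (0:ℝ) ≤ ((ffPart d : ℕ) : ℝ))]

end Gsec
section Pos
variable (M : ℕ) (lam : ℕ → ℝ)

lemma rF_prime_pow_cases (hl : lam 1 = 1) {p : ℕ} (pp : p.Prime) {k : ℕ} (hk : k ≠ 0)
    (hlam1 : p ∣ M → ¬ p ^ 2 ∣ M → (lam p) ^ 2 = 1 / p)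
    (hlam2 : p ^ 2 ∣ M → lam p = 0) :
    rF M lam (p ^ k) =
      if p ∣ M then (if p ^ 2 ∣ M then 1 else 1 - 1 / (p : ℝ) ^ 2) else rho lam p := by
  have hq0 : (0:ℝ) < p := by exact_mod_cast pp.pos
  rw [rF_prime_pow M lam hl pp hk, sigTw_prime M pp]
  by_cases hpM : p ∣ M
  · rw [chi_of_dvd M pp.two_le hpM, if_pos hpM]
    by_cases hp2 : p ^ 2 ∣ M
    · rw [if_pos hp2, hlam2 hp2]
      norm_num
    · rw [if_neg hp2, hlam1 hpM hp2]
      field_simp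
      ring
  · rw [chi_of_not_dvd M pp hpM, if_neg hpM, rho]
    have hq1 : (p:ℝ) + 1 ≠ 0 := by positivity
    field_simp

lemma chi_cases (n : ℕ) : chi M n = 0 ∨ chi M n = 1 := by
  unfold chi; split_ifs <;> simp

lemma alphaF_prime_pow_pos {p : ℕ} (pp : p.Prime) {k : ℕ} (hk : k ≠ 0) :
    0 < alphaF M (p ^ k) := by
  rw [alphaF_prime_pow M pp hk]
  have hq : (2:ℝ) ≤ p := by exact_mod_cast pp.two_le
  have h4 : (1:ℝ)/(p:ℝ)^2 < 1 := by
    rw [div_lt_one (by positivity)]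
    nlinarith
  rcases chi_cases M p with h | h <;> rw [h] <;> [norm_num; linarith]

lemma alphaF_pos {e : ℕ} (he : e ≠ 0) : 0 < alphaF M e := by
  rw [Nat.multiplicative_factorization (alphaF M) (fun x y h => alphaF_mult M x y h)
    (alphaF_one M) he, Finsupp.prod]
  refine Finset.prod_pos fun p hp => ?_
  have hp' := hp
  rw [Nat.support_factorization] at hp'
  exact alphaF_prime_pow_pos M (Nat.prime_of_mem_primeFactors hp')
    (Finsupp.mem_support_iff.mp hp)

lemma rF_pos {L : ℕ} (hmult : IsMult lam)
    (h1 : ∀ p : ℕ, p.Prime → p ∣ M → ¬ p ^ 2 ∣ M → (lam p) ^ 2 = 1 / p)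
    (h2 : ∀ p : ℕ, p.Prime → p ^ 2 ∣ M → lam p = 0)
    (h3 : ∀ p : ℕ, p.Prime → p ∣ L → ¬ p ∣ M → 0 < rho lam p)
    {e : ℕ} (heL : e ∣ L) (he : e ≠ 0) : 0 < rF M lam e := by
  rw [Nat.multiplicative_factorization (rF M lam) (fun x y h => rF_mult M lam hmult x y h)
    (rF_one M lam hmult.1) he, Finsupp.prod]
  refine Finset.prod_pos fun p hp => ?_
  have hp' := hp
  rw [Nat.support_factorization] at hp'
  have pp := Nat.prime_of_mem_primeFactors hp'
  have hpL : p ∣ L := (Nat.dvd_of_mem_primeFactors hp').trans heL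
  rw [rF_prime_pow_cases M lam hmult.1 pp (Finsupp.mem_support_iff.mp hp)
    (h1 p pp) (h2 p pp)]
  have hq : (2:ℝ) ≤ p := by exact_mod_cast pp.two_le
  have h4 : (1:ℝ)/(p:ℝ)^2 < 1 := by
    rw [div_lt_one (by positivity)]
    nlinarith
  split_ifs with hpM hp2
  · norm_num
  · linarith
  · exact h3 p pp hpL hpM

end Pos
section PerPrime
variable (M : ℕ) (lam : ℕ → ℝ)

lemma Gfun_prime_pow (hl : lam 1 = 1) {p : ℕ} (pp : p.Prime) {k : ℕ} (hk : k ≠ 0) :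
    Gfun M lam (p ^ k) = if k = 1 then Afun M lam p else Bfun M lam (p ^ k) := by
  unfold Gfun
  rw [sfPart_prime_pow pp hk, ffPart_prime_pow pp hk]
  split_ifs with h
  · rw [Bfun_one M lam hl, mul_one]
  · rw [Afun_one M lam hl, one_mul]

lemma Bfun_vanish {p : ℕ} (pp : p.Prime) {k : ℕ} (hk : 3 ≤ k) : Bfun M lam (p ^ k) = 0 := by
  unfold Bfun
  rw [muLam_prime_pow M lam pp (by omega)]
  simp [show k ≠ 1 by omega, show k ≠ 2 by omega]

lemma perPrime {L : ℕ} (hmult : IsMult lam)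
    (h1 : ∀ p : ℕ, p.Prime → p ∣ M → ¬ p ^ 2 ∣ M → (lam p) ^ 2 = 1 / p)
    (h2 : ∀ p : ℕ, p.Prime → p ^ 2 ∣ M → lam p = 0)
    (h3 : ∀ p : ℕ, p.Prime → p ∣ L → ¬ p ∣ M → 0 < rho lam p)
    (hL : L ≠ 0) {p : ℕ} (pp : p.Prime) (hpL : p ∣ L) :
    ∑ j ∈ Finset.range (L.factorization p + 1), Gfun M lam (p ^ j)
      = (if ¬ p ∣ M then (rho lam p)⁻¹ else 1) *
        (if (¬ p ∣ M ∧ p ^ 2 ∣ L) ∨ (p ∣ M ∧ ¬ p ^ 2 ∣ M) then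
          (p : ℝ) ^ 2 / ((p : ℝ) ^ 2 - 1) else 1) := by
  have hq2 : (2:ℝ) ≤ (p:ℝ) := by exact_mod_cast pp.two_le
  have hq0 : (0:ℝ) < p := by linarith
  have hq0' : (p:ℝ) ≠ 0 := ne_of_gt hq0
  have hqsq : (1:ℝ) < (p:ℝ) ^ 2 := by nlinarith
  have hqsq' : (p:ℝ) ^ 2 - 1 ≠ 0 := by nlinarith
  have hq1 : (p:ℝ) + 1 ≠ 0 := by positivity
  set v := L.factorization p with hv
  have hv1 : 1 ≤ v := by
    rw [hv]
    exact Nat.Prime.factorization_pos_of_dvd pp hL hpL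
  have hp2L : p ^ 2 ∣ L ↔ 2 ≤ v := by
    rw [hv]
    exact Nat.Prime.pow_dvd_iff_le_factorization pp hL
  have hsum : ∑ j ∈ Finset.range (v + 1), Gfun M lam (p ^ j)
      = 1 + Afun M lam p + (if 2 ≤ v then Bfun M lam (p ^ 2) else 0) := by
    rcases Nat.lt_or_ge v 2 with hv2 | hv2
    · have hv1' : v = 1 := by omega
      rw [hv1', Finset.sum_range_succ, Finset.sum_range_one, pow_zero,
        Gfun_one M lam hmult.1, Gfun_prime_pow M lam hmult.1 pp one_ne_zero]
      norm_num
    · rw [← Finset.sum_subset (Finset.range_subset_range.mpr (by omega) :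
        Finset.range 3 ⊆ Finset.range (v + 1)) (fun j hj hnj => by
          have h3j : 3 ≤ j := by
            simp only [Finset.mem_range] at hnj
            omega
          rw [Gfun_prime_pow M lam hmult.1 pp (by omega), if_neg (by omega)]
          exact Bfun_vanish M lam pp h3j)]
      rw [Finset.sum_range_succ, Finset.sum_range_succ, Finset.sum_range_one,
        pow_zero, Gfun_one M lam hmult.1,
        Gfun_prime_pow M lam hmult.1 pp (k := 1) one_ne_zero,
        Gfun_prime_pow M lam hmult.1 pp (k := 2) two_ne_zero]
      norm_num [hv2]
  rw [hsum]
  have hAfun : Afun M lam p =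
      (lam p) ^ 2 / (rF M lam (p ^ 1) * p * (1 + chi M p / p) ^ 2) := by
    unfold Afun
    rw [ArithmeticFunction.moebius_apply_prime pp,
      show betaF M p = betaF M (p ^ 1) by rw [pow_one],
      betaF_prime_pow M pp one_ne_zero,
      show rF M lam p = rF M lam (p ^ 1) by rw [pow_one]]
    push_cast
    ring_nf
  by_cases hpM : p ∣ M
  · have hchi : chi M p = 0 := chi_of_dvd M pp.two_le hpM
    have hB2 : Bfun M lam (p ^ 2) = 0 := by
      unfold Bfun
      rw [muLam_prime_pow M lam pp two_ne_zero]
      simp [hchi]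
    rw [hB2, ite_self, if_neg (not_not_intro hpM), one_mul]
    by_cases hp2M : p ^ 2 ∣ M
    · have hlam0 : lam p = 0 := h2 p pp hp2M
      rw [if_neg (show ¬ _ from fun h =>
        h.elim (fun hh => hh.1 hpM) (fun hh => hh.2 hp2M))]
      rw [hAfun, hlam0]
      norm_num
    · have hlamsq : (lam p) ^ 2 = 1 / (p:ℝ) := h1 p pp hpM hp2M
      rw [if_pos (Or.inr ⟨hpM, hp2M⟩)]
      rw [hAfun, hlamsq, hchi,
        rF_prime_pow_cases M lam hmult.1 pp one_ne_zero (h1 p pp) (h2 p pp),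
        if_pos hpM, if_neg hp2M]
      have hd : 1 - 1 / (p:ℝ) ^ 2 ≠ 0 := by
        intro h
        apply hqsq'
        field_simp at h ⊢
        linarith
      field_simp
      ring
  · have hchi : chi M p = 1 := chi_of_not_dvd M pp hpM
    have hrho : 0 < rho lam p := h3 p pp hpL hpM
    have hrho' : rho lam p ≠ 0 := ne_of_gt hrho
    have hrF1 : rF M lam (p ^ 1) = rho lam p := by
      rw [rF_prime_pow_cases M lam hmult.1 pp one_ne_zero (h1 p pp) (h2 p pp),
        if_neg hpM]
    have hrdef : rho lam p = 1 - p * (lam p / (p + 1)) ^ 2 := rfl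
    have hden : 1 - (p:ℝ) * (lam p / ((p:ℝ) + 1)) ^ 2 ≠ 0 := by rw [← hrdef]; exact hrho'
    have hA' : Afun M lam p = (1 - rho lam p) / rho lam p := by
      rw [hAfun, hrF1, hchi]
      have hpos : (0:ℝ) < 1 + 1 / (p:ℝ) := by positivity
      rw [div_eq_div_iff (by exact mul_ne_zero (mul_ne_zero hrho' hq0') (by positivity)) hrho']
      rw [hrdef]
      field_simp
      ring
    rw [if_pos hpM]
    by_cases h2v : 2 ≤ v
    · have hB2 : Bfun M lam (p ^ 2)
          = 1 / ((p:ℝ) ^ 2 * (rho lam p * (1 - 1 / (p:ℝ) ^ 2))) := by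
        unfold Bfun
        rw [muLam_prime_pow M lam pp two_ne_zero,
          rF_prime_pow_cases M lam hmult.1 pp two_ne_zero (h1 p pp) (h2 p pp),
          if_neg hpM, alphaF_prime_pow M pp two_ne_zero, hchi]
        norm_num
      rw [if_pos (Or.inl ⟨hpM, hp2L.mpr h2v⟩), if_pos h2v, hA', hB2]
      field_simp
      ring
    · rw [if_neg h2v,
        if_neg (show ¬((¬ p ∣ M ∧ p ^ 2 ∣ L) ∨ (p ∣ M ∧ ¬ p ^ 2 ∣ M)) from fun h =>
          h.elim (fun hh => h2v (hp2L.mp hh.2)) (fun hh => hpM hh.1)),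
        hA', add_zero, mul_one]
      field_simp
      ring

end PerPrime

/-- If `N = L·M`, `λ` is multiplicative, `λ(p)² = 1/p` whenever
`p ∥ M`, `λ(p) = 0` whenever `p² ∣ M`, and `ρ(p) > 0` for all primes `p ∣ L`
with `p ∤ M`, then
`Σ_{d ∣ L} ξ_d(1)² = ∏_{p ∣ L, p ∤ M} ρ(p)⁻¹ · ∏_{p² ∣ N, p² ∤ M} p²/(p² - 1)`. -/
theorem sum_xi_one_sq (L M N : ℕ) (hL : 0 < L) (hM : 0 < M) (hN : N = L * M)
    (lam : ℕ → ℝ) (hmult : IsMult lam)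
    (h1 : ∀ p : ℕ, p.Prime → p ∣ M → ¬ p ^ 2 ∣ M → (lam p) ^ 2 = 1 / p)
    (h2 : ∀ p : ℕ, p.Prime → p ^ 2 ∣ M → lam p = 0)
    (h3 : ∀ p : ℕ, p.Prime → p ∣ L → ¬ p ∣ M → 0 < rho lam p) :
    ∑ d ∈ L.divisors, (xi M lam d 1) ^ 2 =
      (∏ p ∈ L.primeFactors.filter (fun p => ¬ p ∣ M), (rho lam p)⁻¹) *
        ∏ p ∈ N.primeFactors.filter (fun p => p ^ 2 ∣ N ∧ ¬ p ^ 2 ∣ M),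
          (p : ℝ) ^ 2 / ((p : ℝ) ^ 2 - 1) := by
  have hL0 : L ≠ 0 := hL.ne'
  have hM0 : M ≠ 0 := hM.ne'
  have step1 : ∑ d ∈ L.divisors, (xi M lam d 1) ^ 2 = ∑ d ∈ L.divisors, Gfun M lam d := by
    refine Finset.sum_congr rfl fun d hd => ?_
    have hdL : d ∣ L := (Nat.mem_divisors.mp hd).1
    have hd0 : d ≠ 0 := (Nat.pos_of_mem_divisors hd).ne'
    have hsf0 : sfPart d ≠ 0 := fun h => hd0 (Nat.eq_zero_of_zero_dvd (h ▸ sfPart_dvd d))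
    have hff0 : ffPart d ≠ 0 := fun h => hd0 (Nat.eq_zero_of_zero_dvd (h ▸ ffPart_dvd d))
    exact xi_sq_eq M lam d
      (le_of_lt (rF_pos M lam hmult h1 h2 h3 ((sfPart_dvd d).trans hdL) hsf0))
      (le_of_lt (mul_pos (rF_pos M lam hmult h1 h2 h3 ((ffPart_dvd d).trans hdL) hff0)
        (alphaF_pos M hff0)))
  rw [step1,
    sum_divisors_eq_prod_primeFactors (Gfun_one M lam hmult.1)
      (fun x y h => Gfun_mult M lam hmult x y h) hL0]
  have hset : N.primeFactors.filter (fun p => p ^ 2 ∣ N ∧ ¬ p ^ 2 ∣ M)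
      = L.primeFactors.filter (fun p => (¬ p ∣ M ∧ p ^ 2 ∣ L) ∨ (p ∣ M ∧ ¬ p ^ 2 ∣ M)) := by
    ext p
    simp only [Finset.mem_filter, Nat.mem_primeFactors]
    constructor
    · rintro ⟨⟨pp, hpN, hN0⟩, hp2N, hp2M⟩
      rw [hN] at hp2N
      have hpL : p ∣ L := by
        by_contra hnL
        exact hp2M ((Nat.Coprime.pow_left 2
          ((Nat.Prime.coprime_iff_not_dvd pp).mpr hnL)).dvd_of_dvd_mul_left hp2N)
      refine ⟨⟨pp, hpL, hL0⟩, ?_⟩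
      by_cases hpM : p ∣ M
      · exact Or.inr ⟨hpM, hp2M⟩
      · exact Or.inl ⟨hpM, (Nat.Coprime.pow_left 2
          ((Nat.Prime.coprime_iff_not_dvd pp).mpr hpM)).dvd_of_dvd_mul_right hp2N⟩
    · rintro ⟨⟨pp, hpL, -⟩, hcond⟩
      have hN0 : N ≠ 0 := by rw [hN]; exact Nat.mul_ne_zero hL0 hM0
      refine ⟨⟨pp, by rw [hN]; exact hpL.mul_right M, hN0⟩, ?_, ?_⟩
      · rcases hcond with ⟨-, hp2L⟩ | ⟨hpM, -⟩
        · rw [hN]; exact hp2L.mul_right M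
        · rw [hN, pow_two]; exact mul_dvd_mul hpL hpM
      · rcases hcond with ⟨hnpM, -⟩ | ⟨-, hp2M⟩
        · exact fun h => hnpM ((dvd_pow_self p two_ne_zero).trans h)
        · exact hp2M
  rw [hset, Finset.prod_filter, Finset.prod_filter, ← Finset.prod_mul_distrib]
  exact Finset.prod_congr rfl fun p hp =>
    perPrime M lam hmult h1 h2 h3 hL0 (Nat.prime_of_mem_primeFactors hp)
      (Nat.dvd_of_mem_primeFactors hp)

end
end

section
/- Let L be a positive integer and assume λ is multiplicative and r(p) > 0 for every prime p | L. Then Σ_{d | L} ξ_d(1)² = ∏_{p^e ∥ L} ( 1 + λ(p)²/(r(p)·p·β(p)²) + χ(p)·(1 − μ(p^e)²)/(r(p²)·p²·α(p²)) ), where the product runs over primes p with p^e exactly dividing L (p^e | L and p^{e+1} ∤ L). -/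
open scoped BigOperators
open Finset

noncomputable section

namespace SumXiAux

open ArithmeticFunction

/-- value 1 at 1, multiplicative on nonzero coprime pairs. -/
def Mult1 (F : ℕ → ℝ) : Prop :=
  F 1 = 1 ∧ ∀ m n : ℕ, m ≠ 0 → n ≠ 0 → Nat.Coprime m n → F (m * n) = F m * F n

lemma chi_one (M : ℕ) : chi M 1 = 1 := by simp [chi]

lemma chi_nonneg (M n : ℕ) : 0 ≤ chi M n := by unfold chi; split <;> norm_num

lemma chi_le_one (M n : ℕ) : chi M n ≤ 1 := by unfold chi; split <;> norm_num

lemma chi_sq (M n : ℕ) : chi M n ^ 2 = chi M n := by unfold chi; split <;> norm_num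

lemma chi_mul (M m n : ℕ) : chi M (m * n) = chi M m * chi M n := by
  unfold chi
  have h : Nat.gcd (m * n) M = 1 ↔ (Nat.gcd m M = 1 ∧ Nat.gcd n M = 1) :=
    Nat.coprime_mul_iff_left
  by_cases h1 : Nat.gcd m M = 1 <;> by_cases h2 : Nat.gcd n M = 1 <;>
    simp [h, h1, h2]

lemma dsum_mult {g : ℕ → ℝ} (h1 : g 1 = 1)
    (hg : ∀ m n : ℕ, m ≠ 0 → n ≠ 0 → Nat.Coprime m n → g (m * n) = g m * g n) :
    Mult1 (fun n => ∑ b ∈ n.divisors, g b) := by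
  set G : ArithmeticFunction ℝ := ⟨fun n => if n = 0 then 0 else g n, if_pos rfl⟩ with hGdef
  have hGapp : ∀ n : ℕ, n ≠ 0 → G n = g n := fun n hn => by
    simp [hGdef, ArithmeticFunction.coe_mk, hn]
  have hG : G.IsMultiplicative := by
    rw [ArithmeticFunction.IsMultiplicative.iff_ne_zero]
    refine ⟨by rw [hGapp 1 one_ne_zero, h1], fun {m n} hm hn hmn => ?_⟩
    rw [hGapp _ (mul_ne_zero hm hn), hGapp _ hm, hGapp _ hn, hg m n hm hn hmn]
  have hsum : ∀ x : ℕ, (G * (ArithmeticFunction.zeta : ArithmeticFunction ℝ)) x = ∑ b ∈ x.divisors, g b := by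
    intro x
    rw [ArithmeticFunction.coe_mul_zeta_apply]
    exact Finset.sum_congr rfl fun b hb => hGapp b (Nat.pos_of_mem_divisors hb).ne'
  constructor
  · simp [Nat.divisors_one, h1]
  · intro m n hm hn hmn
    have h := (hG.mul (isMultiplicative_zeta.natCast)).map_mul_of_coprime hmn
    rw [hsum, hsum, hsum] at h
    exact h

lemma mult_moebius : Mult1 (fun n => (moebius n : ℝ)) := by
  refine ⟨by simp, fun m n _ _ h => ?_⟩
  have := isMultiplicative_moebius.map_mul_of_coprime h
  push_cast [this]
  ring

lemma sigTw_one (M : ℕ) : sigTw M 1 = 1 := by simp [sigTw, chi_one]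

lemma mult_sigTw (M : ℕ) : Mult1 (sigTw M) := by
  have := dsum_mult (g := fun r => chi M r / (r : ℝ)) (by simp [chi_one])
    (fun m n hm hn hmn => by push_cast [chi_mul]; exact mul_div_mul_comm _ _ _ _)
  exact this

lemma mult_rF (M : ℕ) {lam : ℕ → ℝ} (hlam : IsMult lam) : Mult1 (rF M lam) := by
  have := dsum_mult
    (g := fun b => (moebius b : ℝ) * (lam b) ^ 2 / (b * (sigTw M b) ^ 2))
    (by simp [hlam.1, sigTw_one])
    (fun m n hm hn hmn => by
      have hmu := isMultiplicative_moebius.map_mul_of_coprime hmn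
      have hl := hlam.2 m n hmn
      have hs := (mult_sigTw M).2 m n hm hn hmn
      push_cast [hmu, hl, hs]
      ring)
  exact this

lemma mult_alphaF (M : ℕ) : Mult1 (alphaF M) := by
  have := dsum_mult
    (g := fun b => chi M b * (moebius b : ℝ) / (b : ℝ) ^ 2)
    (by simp [chi_one])
    (fun m n hm hn hmn => by
      have hmu := isMultiplicative_moebius.map_mul_of_coprime hmn
      push_cast [hmu, chi_mul]
      ring)
  exact this

lemma mult_betaF (M : ℕ) : Mult1 (betaF M) := by
  have := dsum_mult
    (g := fun b => chi M b * (moebius b : ℝ) ^ 2 / (b : ℝ))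
    (by simp [chi_one])
    (fun m n hm hn hmn => by
      have hmu := isMultiplicative_moebius.map_mul_of_coprime hmn
      push_cast [hmu, chi_mul]
      ring)
  exact this

lemma prod_primeFactors_mult (t : ℕ → ℕ → ℝ) {m n : ℕ} (hm : m ≠ 0) (hn : n ≠ 0)
    (h : Nat.Coprime m n) :
    ∏ p ∈ (m * n).primeFactors, t p ((m * n).factorization p)
      = (∏ p ∈ m.primeFactors, t p (m.factorization p)) *
        (∏ p ∈ n.primeFactors, t p (n.factorization p)) := by
  rw [Nat.primeFactors_mul hm hn, Finset.prod_union h.disjoint_primeFactors]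
  congr 1
  · refine Finset.prod_congr rfl fun p hp => ?_
    have hpn : ¬ p ∣ n := by
      intro hdvd
      have h1 : p ∣ Nat.gcd m n := Nat.dvd_gcd (Nat.dvd_of_mem_primeFactors hp) hdvd
      rw [Nat.Coprime.gcd_eq_one h] at h1
      exact (Nat.prime_of_mem_primeFactors hp).one_lt.ne' (Nat.eq_one_of_dvd_one h1)
    rw [Nat.factorization_mul hm hn, Finsupp.add_apply,
      Nat.factorization_eq_zero_of_not_dvd hpn, add_zero]
  · refine Finset.prod_congr rfl fun p hp => ?_
    have hpm : ¬ p ∣ m := by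
      intro hdvd
      have h1 : p ∣ Nat.gcd m n := Nat.dvd_gcd hdvd (Nat.dvd_of_mem_primeFactors hp)
      rw [Nat.Coprime.gcd_eq_one h] at h1
      exact (Nat.prime_of_mem_primeFactors hp).one_lt.ne' (Nat.eq_one_of_dvd_one h1)
    rw [Nat.factorization_mul hm hn, Finsupp.add_apply,
      Nat.factorization_eq_zero_of_not_dvd hpm, zero_add]

lemma mult_muLam (M : ℕ) (lam : ℕ → ℝ) : Mult1 (muLam M lam) := by
  refine ⟨by simp [muLam], fun m n hm hn hmn => ?_⟩
  exact prod_primeFactors_mult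
    (fun p e => if e = 1 then -lam p else if e = 2 then chi M p else 0) hm hn hmn

lemma Mult1.prod_eval {F : ℕ → ℝ} (hF : Mult1 F) {S : Finset ℕ}
    (hS : ∀ p ∈ S, Nat.Prime p) (e : ℕ → ℕ) :
    F (∏ p ∈ S, p ^ e p) = ∏ p ∈ S, F (p ^ e p) := by
  classical
  induction S using Finset.induction_on with
  | empty => simpa using hF.1
  | @insert q s hq ih =>
    have hqp : q.Prime := hS q (Finset.mem_insert_self q s)
    have hs' : ∀ p ∈ s, Nat.Prime p := fun p hp => hS p (Finset.mem_insert_of_mem hp)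
    have hcop : Nat.Coprime (q ^ e q) (∏ p ∈ s, p ^ e p) := by
      apply Nat.Coprime.pow_left
      apply Nat.Coprime.prod_right
      intro p hp
      apply Nat.Coprime.pow_right
      exact (Nat.coprime_primes hqp (hs' p hp)).mpr (by rintro rfl; exact hq hp)
    have hprodne : (∏ p ∈ s, p ^ e p) ≠ 0 := by
      refine Finset.prod_ne_zero_iff.mpr fun p hp => pow_ne_zero _ (hs' p hp).pos.ne'
    rw [Finset.prod_insert hq, Finset.prod_insert hq,
      hF.2 _ _ (pow_ne_zero _ hqp.pos.ne') hprodne hcop, ih hs']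

lemma sum_range_eq01 {k : ℕ} (hk : 1 ≤ k) {g : ℕ → ℝ} (hg : ∀ i, 2 ≤ i → g i = 0) :
    ∑ i ∈ range (k + 1), g i = g 0 + g 1 := by
  induction k with
  | zero => exact absurd hk (by norm_num)
  | succ n ih =>
    rcases Nat.eq_zero_or_pos n with rfl | hn
    · rw [Finset.sum_range_succ, Finset.sum_range_one]
    · rw [Finset.sum_range_succ, ih hn, hg (n + 1) (by omega), add_zero]

lemma sum_range_eq012 {k : ℕ} (hk : 2 ≤ k) {g : ℕ → ℝ} (hg : ∀ i, 3 ≤ i → g i = 0) :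
    ∑ i ∈ range (k + 1), g i = g 0 + g 1 + g 2 := by
  induction k with
  | zero => exact absurd hk (by norm_num)
  | succ n ih =>
    rcases Nat.lt_or_ge n 2 with hn | hn
    · have : n = 1 := by omega
      subst this
      rw [Finset.sum_range_succ, Finset.sum_range_succ, Finset.sum_range_one]
    · rw [Finset.sum_range_succ, ih hn, hg (n + 1) (by omega), add_zero]

lemma sigTw_prime {p : ℕ} (hp : p.Prime) (M : ℕ) : sigTw M p = 1 + chi M p / p := by
  rw [sigTw, hp.divisors, Finset.sum_pair hp.one_lt.ne]
  simp [chi_one]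

lemma rF_prime_pow {p k : ℕ} (hp : p.Prime) (hk : k ≠ 0) (M : ℕ) {lam : ℕ → ℝ}
    (hlam : IsMult lam) :
    rF M lam (p ^ k) = 1 - lam p ^ 2 / (p * sigTw M p ^ 2) := by
  rw [rF, Nat.sum_divisors_prime_pow hp,
    sum_range_eq01 (by omega) (fun i hi => by
      rw [moebius_apply_prime_pow hp (by omega : i ≠ 0), if_neg (by omega)]
      push_cast
      rw [zero_mul, zero_div])]
  rw [pow_zero, pow_one]
  simp only [moebius_apply_one, moebius_apply_prime hp, hlam.1, sigTw_one]
  push_cast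
  ring

lemma alphaF_prime_pow {p k : ℕ} (hp : p.Prime) (hk : k ≠ 0) (M : ℕ) :
    alphaF M (p ^ k) = 1 - chi M p / (p : ℝ) ^ 2 := by
  rw [alphaF, Nat.sum_divisors_prime_pow hp,
    sum_range_eq01 (by omega) (fun i hi => by
      rw [moebius_apply_prime_pow hp (by omega : i ≠ 0), if_neg (by omega)]
      push_cast
      rw [mul_zero, zero_div])]
  rw [pow_zero, pow_one]
  simp only [moebius_apply_one, moebius_apply_prime hp, chi_one]
  push_cast
  ring

lemma betaF_prime_pow {p k : ℕ} (hp : p.Prime) (hk : k ≠ 0) (M : ℕ) :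
    betaF M (p ^ k) = 1 + chi M p / p := by
  rw [betaF, Nat.sum_divisors_prime_pow hp,
    sum_range_eq01 (by omega) (fun i hi => by
      rw [moebius_apply_prime_pow hp (by omega : i ≠ 0), if_neg (by omega)]
      push_cast
      rw [zero_pow (by norm_num), mul_zero, zero_div])]
  rw [pow_zero, pow_one]
  simp only [moebius_apply_one, moebius_apply_prime hp, chi_one]
  push_cast
  ring

lemma muLam_prime_pow {p k : ℕ} (hp : p.Prime) (hk : k ≠ 0) (M : ℕ) (lam : ℕ → ℝ) :
    muLam M lam (p ^ k) =
      if k = 1 then -lam p else if k = 2 then chi M p else 0 := by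
  rw [muLam, Nat.primeFactors_prime_pow hk hp, Finset.prod_singleton,
    hp.factorization_pow, Finsupp.single_eq_same]

lemma muLam_one (M : ℕ) (lam : ℕ → ℝ) : muLam M lam 1 = 1 := by simp [muLam]

lemma rF_one (M : ℕ) {lam : ℕ → ℝ} (hlam : IsMult lam) : rF M lam 1 = 1 := by
  simp [rF, hlam.1, sigTw_one]

lemma alphaF_one (M : ℕ) : alphaF M 1 = 1 := by simp [alphaF, chi_one]

lemma betaF_one (M : ℕ) : betaF M 1 = 1 := by simp [betaF, chi_one]

lemma rF_pow_eq {p k : ℕ} (hp : p.Prime) (hk : k ≠ 0) (M : ℕ) {lam : ℕ → ℝ}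
    (hlam : IsMult lam) : rF M lam (p ^ k) = rF M lam p := by
  rw [rF_prime_pow hp hk M hlam, ← rF_prime_pow hp one_ne_zero M hlam, pow_one]

lemma alphaF_pow_pos {p k : ℕ} (hp : p.Prime) (hk : k ≠ 0) (M : ℕ) :
    0 < alphaF M (p ^ k) := by
  rw [alphaF_prime_pow hp hk M]
  have hp2 : (2 : ℝ) ≤ p := by exact_mod_cast hp.two_le
  have : chi M p / (p : ℝ) ^ 2 ≤ 1 / 4 := by
    apply div_le_div₀ (by norm_num) (chi_le_one M p) (by norm_num)
    nlinarith
  linarith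

lemma betaF_pow_pos {p k : ℕ} (hp : p.Prime) (hk : k ≠ 0) (M : ℕ) :
    0 < betaF M (p ^ k) := by
  rw [betaF_prime_pow hp hk M]
  have hppos : (0 : ℝ) < (p : ℝ) := by exact_mod_cast hp.pos
  have := chi_nonneg M p
  positivity

/-- local factor -/
def T (M : ℕ) (lam : ℕ → ℝ) (p e : ℕ) : ℝ :=
  if e = 0 then 1
  else if e = 1 then lam p ^ 2 / (rF M lam p * p * betaF M p ^ 2)
  else chi M p * (if e = 2 then 1 else 0) /
    (rF M lam (p ^ 2) * (p : ℝ) ^ 2 * alphaF M (p ^ 2))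

lemma xi_sq_eq (M : ℕ) {lam : ℕ → ℝ} (hlam : IsMult lam) {L : ℕ}
    (hr : ∀ p : ℕ, p.Prime → p ∣ L → 0 < rF M lam p)
    {d : ℕ} (hd0 : d ≠ 0) (hdL : d ∣ L) :
    xi M lam d 1 ^ 2 = ∏ p ∈ d.primeFactors, T M lam p (d.factorization p) := by
  classical
  have hmultlam : Mult1 lam := ⟨hlam.1, fun m n _ _ h => hlam.2 m n h⟩
  have hprime : ∀ p ∈ d.primeFactors, Nat.Prime p := fun p hp =>
    Nat.prime_of_mem_primeFactors hp
  have hrp : ∀ p ∈ d.primeFactors, 0 < rF M lam p := fun p hp =>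
    hr p (hprime p hp) ((Nat.dvd_of_mem_primeFactors hp).trans hdL)
  have hvne : ∀ p ∈ d.primeFactors, d.factorization p ≠ 0 := fun p hp => by
    rw [← Nat.support_factorization] at hp
    exact Finsupp.mem_support_iff.mp hp
  set S1 := d.primeFactors.filter (fun p => d.factorization p = 1) with hS1
  set S2 := d.primeFactors.filter (fun p => ¬ d.factorization p = 1) with hS2
  have hS1p : ∀ p ∈ S1, Nat.Prime p := fun p hp => hprime p (Finset.mem_filter.mp hp).1
  have hS2p : ∀ p ∈ S2, Nat.Prime p := fun p hp => hprime p (Finset.mem_filter.mp hp).1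
  have hS2v : ∀ p ∈ S2, d.factorization p ≠ 0 := fun p hp =>
    hvne p (Finset.mem_filter.mp hp).1
  have hsf : sfPart d = ∏ p ∈ S1, p ^ (1 : ℕ) := by
    rw [hS1, Finset.prod_filter, sfPart]
    exact Finset.prod_congr rfl fun p _ => by
      by_cases h : d.factorization p = 1 <;> simp [h]
  have hff : ffPart d = ∏ p ∈ S2, p ^ d.factorization p := by
    rw [hS2, Finset.prod_filter, ffPart]
    exact Finset.prod_congr rfl fun p _ => by
      by_cases h : d.factorization p = 1 <;> simp [h]
  -- part A
  have hrF1 : rF M lam (sfPart d) = ∏ p ∈ S1, rF M lam p := by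
    rw [hsf, (mult_rF M hlam).prod_eval hS1p]
    exact Finset.prod_congr rfl fun p _ => by rw [pow_one]
  have hrF1pos : 0 < rF M lam (sfPart d) := by
    rw [hrF1]; exact Finset.prod_pos fun p hp => hrp p (Finset.mem_filter.mp hp).1
  have hcast1 : ((sfPart d : ℕ) : ℝ) = ∏ p ∈ S1, (p : ℝ) := by
    rw [hsf]; push_cast
    exact Finset.prod_congr rfl fun p _ => by rw [pow_one]
  have hbeta1 : betaF M (sfPart d) = ∏ p ∈ S1, betaF M p := by
    rw [hsf, (mult_betaF M).prod_eval hS1p]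
    exact Finset.prod_congr rfl fun p _ => by rw [pow_one]
  have hmoeb1 : ((moebius (sfPart d) : ℤ) : ℝ) = ∏ p ∈ S1, ((moebius p : ℤ) : ℝ) := by
    rw [hsf, mult_moebius.prod_eval hS1p]
    exact Finset.prod_congr rfl fun p _ => by rw [pow_one]
  have hlam1 : lam (sfPart d) = ∏ p ∈ S1, lam p := by
    rw [hsf, hmultlam.prod_eval hS1p]
    exact Finset.prod_congr rfl fun p _ => by rw [pow_one]
  have hA : xi' M lam (sfPart d) 1 ^ 2 = ∏ p ∈ S1, T M lam p (d.factorization p) := by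
    have hterm : ∀ p ∈ S1, T M lam p (d.factorization p)
        = ((moebius p : ℤ) : ℝ) ^ 2 * lam p ^ 2 /
          (rF M lam p * (p : ℝ) * betaF M p ^ 2) := by
      intro p hp
      obtain ⟨hpd, hv1⟩ := Finset.mem_filter.mp hp
      rw [hv1, T, if_neg one_ne_zero, if_pos rfl, moebius_apply_prime (hprime p hpd)]
      norm_num
    rw [xi', Nat.div_one, Finset.prod_congr rfl hterm, Finset.prod_div_distrib,
      Finset.prod_mul_distrib, Finset.prod_mul_distrib, Finset.prod_mul_distrib,
      Finset.prod_pow, Finset.prod_pow, Finset.prod_pow,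
      ← hmoeb1, ← hlam1, ← hrF1, ← hcast1, ← hbeta1,
      div_pow, mul_pow, mul_pow, mul_pow, Real.sq_sqrt hrF1pos.le,
      Real.sq_sqrt (by positivity : (0:ℝ) ≤ ((sfPart d : ℕ) : ℝ))]
  -- part B
  have hrF2 : rF M lam (ffPart d) = ∏ p ∈ S2, rF M lam (p ^ d.factorization p) := by
    rw [hff, (mult_rF M hlam).prod_eval hS2p]
  have halpha2 : alphaF M (ffPart d) = ∏ p ∈ S2, alphaF M (p ^ d.factorization p) := by
    rw [hff, (mult_alphaF M).prod_eval hS2p]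
  have hmu2 : muLam M lam (ffPart d) = ∏ p ∈ S2, muLam M lam (p ^ d.factorization p) := by
    rw [hff, (mult_muLam M lam).prod_eval hS2p]
  have hcast2 : ((ffPart d : ℕ) : ℝ) = ∏ p ∈ S2, (p : ℝ) ^ d.factorization p := by
    rw [hff]; push_cast; rfl
  have hra : 0 < rF M lam (ffPart d) * alphaF M (ffPart d) := by
    rw [hrF2, halpha2]
    refine mul_pos (Finset.prod_pos fun p hp => ?_) (Finset.prod_pos fun p hp => ?_)
    · rw [rF_pow_eq (hS2p p hp) (hS2v p hp) M hlam]
      exact hrp p (Finset.mem_filter.mp hp).1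
    · exact alphaF_pow_pos (hS2p p hp) (hS2v p hp) M
  have hB : xi'' M lam (ffPart d) 1 ^ 2 = ∏ p ∈ S2, T M lam p (d.factorization p) := by
    have hterm2 : ∀ p ∈ S2, T M lam p (d.factorization p)
        = muLam M lam (p ^ d.factorization p) ^ 2 /
          ((p : ℝ) ^ d.factorization p *
            (rF M lam (p ^ d.factorization p) * alphaF M (p ^ d.factorization p))) := by
      intro p hp
      obtain ⟨hpd, hv1⟩ := Finset.mem_filter.mp hp
      have hpp := hprime p hpd
      have hk0 : d.factorization p ≠ 0 := hvne p hpd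
      by_cases h2 : d.factorization p = 2
      · rw [h2, muLam_prime_pow hpp two_ne_zero, if_neg (by norm_num), if_pos rfl,
          T, if_neg (by norm_num), if_neg (by norm_num), if_pos rfl, chi_sq]
        ring
      · rw [muLam_prime_pow hpp hk0, if_neg hv1, if_neg h2,
          T, if_neg hk0, if_neg hv1, if_neg h2]
        norm_num
    rw [xi'', Nat.div_one, Finset.prod_congr rfl hterm2, Finset.prod_div_distrib,
      Finset.prod_mul_distrib, Finset.prod_mul_distrib, Finset.prod_pow,
      ← hmu2, ← hcast2, ← hrF2, ← halpha2,
      div_pow, mul_pow, Real.sq_sqrt (by positivity : (0:ℝ) ≤ ((ffPart d : ℕ) : ℝ)),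
      Real.sq_sqrt hra.le]
  rw [xi, Nat.gcd_one_right, Nat.gcd_one_right, mul_pow, hA, hB, hS1, hS2,
    Finset.prod_filter_mul_prod_filter_not]

lemma local_sum (M : ℕ) (lam : ℕ → ℝ) {p e : ℕ} (hp : p.Prime) (he : e ≠ 0) :
    ∑ i ∈ range (e + 1), T M lam p i
      = 1 + lam p ^ 2 / (rF M lam p * p * betaF M p ^ 2)
        + chi M p * (1 - ((moebius (p ^ e) : ℤ) : ℝ) ^ 2) /
          (rF M lam (p ^ 2) * (p : ℝ) ^ 2 * alphaF M (p ^ 2)) := by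
  rcases eq_or_ne e 1 with rfl | he1
  · rw [Finset.sum_range_succ, Finset.sum_range_one, pow_one, moebius_apply_prime hp]
    simp only [T]
    norm_num
  · have he2 : 2 ≤ e := by omega
    rw [sum_range_eq012 he2 (fun i hi => by
      rw [T, if_neg (by omega : ¬ i = 0), if_neg (by omega : ¬ i = 1),
        if_neg (by omega : ¬ i = 2), mul_zero, zero_div]),
      moebius_apply_prime_pow hp he, if_neg he1]
    simp only [T]
    norm_num

end SumXiAux

/-- If `λ` is multiplicative and `r(p) > 0` for every prime
`p ∣ L`, then `Σ_{d ∣ L} ξ_d(1)²` equals the Euler product over `p^e ∥ L` of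
`1 + λ(p)²/(r(p) p β(p)²) + χ(p)(1 - μ(p^e)²)/(r(p²) p² α(p²))`. -/
theorem sum_xi_one_sq_euler (M : ℕ) (hM : 0 < M) (L : ℕ) (hL : 0 < L)
    (lam : ℕ → ℝ) (hmult : IsMult lam)
    (hr : ∀ p : ℕ, p.Prime → p ∣ L → 0 < rF M lam p) :
    ∑ d ∈ L.divisors, (xi M lam d 1) ^ 2 =
      ∏ p ∈ L.primeFactors,
        (1 + (lam p) ^ 2 / (rF M lam p * p * (betaF M p) ^ 2)
          + chi M p *
              (1 - ((ArithmeticFunction.moebius (p ^ L.factorization p) : ℝ)) ^ 2) /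
            (rF M lam (p ^ 2) * (p : ℝ) ^ 2 * alphaF M (p ^ 2))) := by

  classical
  have hL0 : L ≠ 0 := hL.ne'
  set F : ArithmeticFunction ℝ :=
    ⟨fun d => if d = 0 then 0
      else ∏ p ∈ d.primeFactors, SumXiAux.T M lam p (d.factorization p),
      if_pos rfl⟩ with hFdef
  have hFapp : ∀ d : ℕ, d ≠ 0 →
      F d = ∏ p ∈ d.primeFactors, SumXiAux.T M lam p (d.factorization p) := fun d hd => by
    simp [hFdef, ArithmeticFunction.coe_mk, hd]
  have hF1 : F 1 = 1 := by rw [hFapp 1 one_ne_zero]; simp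
  have hFmult : F.IsMultiplicative := by
    rw [ArithmeticFunction.IsMultiplicative.iff_ne_zero]
    refine ⟨hF1, fun {m n} hm hn hmn => ?_⟩
    rw [hFapp _ (mul_ne_zero hm hn), hFapp _ hm, hFapp _ hn]
    exact SumXiAux.prod_primeFactors_mult _ hm hn hmn
  have key : ∑ d ∈ L.divisors, xi M lam d 1 ^ 2
      = (F * (ArithmeticFunction.zeta : ArithmeticFunction ℝ)) L := by
    rw [ArithmeticFunction.coe_mul_zeta_apply]
    refine Finset.sum_congr rfl fun d hd => ?_
    have hd0 : d ≠ 0 := (Nat.pos_of_mem_divisors hd).ne'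
    rw [hFapp d hd0, SumXiAux.xi_sq_eq M hmult hr hd0 (Nat.dvd_of_mem_divisors hd)]
  rw [key, ArithmeticFunction.IsMultiplicative.multiplicative_factorization _
    (hFmult.mul ArithmeticFunction.isMultiplicative_zeta.natCast) hL0,
    Finsupp.prod, Nat.support_factorization]
  refine Finset.prod_congr rfl fun p hpL => ?_
  have hp : p.Prime := Nat.prime_of_mem_primeFactors hpL
  have he : L.factorization p ≠ 0 := by
    rw [← Nat.support_factorization] at hpL
    exact Finsupp.mem_support_iff.mp hpL
  have hFpow : ∀ i : ℕ, F (p ^ i) = SumXiAux.T M lam p i := by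
    intro i
    rcases eq_or_ne i 0 with rfl | hi
    · rw [pow_zero, hF1]; simp [SumXiAux.T]
    · rw [hFapp _ (pow_ne_zero _ hp.pos.ne'), Nat.primeFactors_prime_pow hi hp,
        Finset.prod_singleton, hp.factorization_pow, Finsupp.single_eq_same]
  rw [ArithmeticFunction.coe_mul_zeta_apply, Nat.sum_divisors_prime_pow hp,
    Finset.sum_congr rfl (fun i _ => hFpow i), SumXiAux.local_sum M lam hp he]


end
end

section
/- The arithmetic function η is multiplicative, and its values at prime powers are: η(p) = p − 1, η(p²) = p² − p − 1, and η(p^v) = p^v·(1 − 1/p)·(1 − 1/p²) for every integer v ≥ 3 and every prime p. -/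
open scoped BigOperators
open Finset

noncomputable section

/-- `η(n) = Σ_{LM = n} μ(L) · M · ∏_{p² ∣ M} (1 - 1/p²)`, the sum running over
all ordered factorizations `n = L·M` and the product over primes `p` with
`p² ∣ M`, as a real number. -/
def eta (n : ℕ) : ℝ :=
  ∑ L ∈ n.divisors,
    (ArithmeticFunction.moebius L : ℝ) * (n / L : ℕ) *
      ∏ p ∈ (n / L).primeFactors.filter (fun p => p ^ 2 ∣ n / L),
        (1 - 1 / (p : ℝ) ^ 2)

/-- The multiplicative factor `M ↦ M · ∏_{p² ∣ M} (1 - 1/p²)`. -/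
def etaF : ArithmeticFunction ℝ :=
  ⟨fun M => (M : ℝ) * ∏ p ∈ M.primeFactors.filter (fun p => p ^ 2 ∣ M),
      (1 - 1 / (p : ℝ) ^ 2), by simp⟩

lemma etaF_apply (M : ℕ) :
    etaF M = (M : ℝ) * ∏ p ∈ M.primeFactors.filter (fun p => p ^ 2 ∣ M),
      (1 - 1 / (p : ℝ) ^ 2) := rfl

lemma etaF_one : etaF 1 = 1 := by
  simp [etaF_apply]

lemma etaF_mult : etaF.IsMultiplicative := by
  refine ⟨etaF_one, ?_⟩
  intro m n h
  rcases eq_or_ne m 0 with rfl | hm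
  · have hn : n = 1 := by simpa using h
    subst hn; simp [etaF_apply]
  rcases eq_or_ne n 0 with rfl | hn
  · have hm1 : m = 1 := by simpa [Nat.coprime_zero_right] using h
    subst hm1; simp [etaF_apply]
  have hdisj : Disjoint m.primeFactors n.primeFactors := h.disjoint_primeFactors
  have hunion : (m * n).primeFactors = m.primeFactors ∪ n.primeFactors :=
    Nat.primeFactors_mul hm hn
  have hfilter :
      (m * n).primeFactors.filter (fun p => p ^ 2 ∣ m * n) =
        m.primeFactors.filter (fun p => p ^ 2 ∣ m) ∪
          n.primeFactors.filter (fun p => p ^ 2 ∣ n) := by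
    rw [hunion, Finset.filter_union]
    congr 1
    · apply Finset.filter_congr
      intro p hp
      have hpm : p ∣ m := Nat.dvd_of_mem_primeFactors hp
      have hcop : Nat.Coprime (p ^ 2) n :=
        (Nat.Coprime.coprime_dvd_left hpm h).pow_left _
      constructor
      · intro hd; exact (Nat.Coprime.dvd_of_dvd_mul_right hcop hd)
      · intro hd; exact hd.trans (dvd_mul_right m n)
    · apply Finset.filter_congr
      intro p hp
      have hpn : p ∣ n := Nat.dvd_of_mem_primeFactors hp
      have hcop : Nat.Coprime (p ^ 2) m :=
        (Nat.Coprime.coprime_dvd_left hpn h.symm).pow_left _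
      constructor
      · intro hd; exact (Nat.Coprime.dvd_of_dvd_mul_left hcop hd)
      · intro hd; exact hd.trans (dvd_mul_left n m)
  have hdisj' : Disjoint (m.primeFactors.filter (fun p => p ^ 2 ∣ m))
      (n.primeFactors.filter (fun p => p ^ 2 ∣ n)) :=
    Finset.disjoint_filter_filter hdisj
  rw [etaF_apply, etaF_apply, etaF_apply, hfilter, Finset.prod_union hdisj']
  push_cast
  ring

lemma eta_eq_sum (n : ℕ) :
    eta n = ∑ L ∈ n.divisors, (ArithmeticFunction.moebius L : ℝ) * etaF (n / L) := by
  unfold eta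
  refine Finset.sum_congr rfl fun L _ => ?_
  rw [etaF_apply, mul_assoc]

lemma eta_eq_conv (n : ℕ) :
    eta n = ((ArithmeticFunction.moebius : ArithmeticFunction ℤ) *
      etaF : ArithmeticFunction ℝ) n := by
  rw [eta_eq_sum, ArithmeticFunction.mul_apply,
    ← Nat.sum_divisorsAntidiagonal (fun L M => (ArithmeticFunction.moebius L : ℝ) * etaF M)]
  refine Finset.sum_congr rfl fun x _ => ?_
  rw [ArithmeticFunction.intCoe_apply]

lemma eta_mult : ∀ m n : ℕ, Nat.Coprime m n → eta (m * n) = eta m * eta n := by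
  intro m n h
  rw [eta_eq_conv, eta_eq_conv, eta_eq_conv]
  exact (ArithmeticFunction.isMultiplicative_moebius.intCast.mul etaF_mult).map_mul_of_coprime h

lemma eta_one : eta 1 = 1 := by
  rw [eta_eq_conv]
  exact (ArithmeticFunction.isMultiplicative_moebius.intCast.mul etaF_mult).map_one

lemma etaF_prime_pow {p : ℕ} (hp : p.Prime) {k : ℕ} (hk : 2 ≤ k) :
    etaF (p ^ k) = (p : ℝ) ^ k * (1 - 1 / (p : ℝ) ^ 2) := by
  have hk0 : k ≠ 0 := by omega
  rw [etaF_apply, Nat.primeFactors_prime_pow hk0 hp]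
  have : ({p} : Finset ℕ).filter (fun q => q ^ 2 ∣ p ^ k) = {p} := by
    rw [Finset.filter_eq_self]
    intro q hq
    rw [Finset.mem_singleton] at hq
    subst hq
    exact pow_dvd_pow _ hk
  rw [this, Finset.prod_singleton]
  push_cast
  ring

lemma etaF_prime {p : ℕ} (hp : p.Prime) : etaF p = (p : ℝ) := by
  rw [etaF_apply, hp.primeFactors]
  have : ({p} : Finset ℕ).filter (fun q => q ^ 2 ∣ p) = ∅ := by
    rw [Finset.filter_eq_empty_iff]
    intro q hq
    rw [Finset.mem_singleton] at hq
    subst hq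
    intro hd
    have := Nat.le_of_dvd hp.pos hd
    nlinarith [hp.two_le]
  rw [this]
  simp

lemma eta_prime_pow {p : ℕ} (hp : p.Prime) {v : ℕ} (hv : 1 ≤ v) :
    eta (p ^ v) = etaF (p ^ v) - etaF (p ^ (v - 1)) := by
  rw [eta_eq_sum, Nat.sum_divisors_prime_pow hp]
  have hterm : ∀ i ∈ Finset.range (v + 1),
      (ArithmeticFunction.moebius (p ^ i) : ℝ) * etaF (p ^ v / p ^ i) =
        (if i = 0 then etaF (p ^ v) else 0) +
          (if i = 1 then -etaF (p ^ (v - 1)) else 0) := by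
    intro i hi
    rw [Finset.mem_range] at hi
    rcases Nat.eq_zero_or_pos i with rfl | hi0
    · simp
    have hdiv : p ^ v / p ^ i = p ^ (v - i) :=
      Nat.pow_div (by omega) hp.pos
    rw [ArithmeticFunction.moebius_apply_prime_pow hp (by omega), hdiv]
    rcases eq_or_ne i 1 with rfl | hi1
    · simp
    · rw [if_neg hi1, if_neg (show ¬ i = 0 by omega)]
      simp [hi1]
  rw [Finset.sum_congr rfl hterm, Finset.sum_add_distrib,
    Finset.sum_ite_eq' _ 0, Finset.sum_ite_eq' _ 1]
  have hv' : 0 < v := hv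
  simp [Finset.mem_range, hv', Nat.lt_succ_iff]
  ring

/-- `η` is multiplicative, with `η(p) = p - 1`,
`η(p²) = p² - p - 1`, and `η(p^v) = p^v (1 - 1/p)(1 - 1/p²)` for `v ≥ 3`. -/
theorem eta_multiplicative_and_values :
    (eta 1 = 1 ∧
      ∀ m n : ℕ, 0 < m → 0 < n → Nat.Coprime m n → eta (m * n) = eta m * eta n) ∧
    ∀ p : ℕ, p.Prime →
      eta p = (p : ℝ) - 1 ∧
      eta (p ^ 2) = (p : ℝ) ^ 2 - p - 1 ∧
      ∀ v : ℕ, 3 ≤ v →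
        eta (p ^ v) = (p : ℝ) ^ v * (1 - 1 / p) * (1 - 1 / (p : ℝ) ^ 2) := by
  constructor
  · exact ⟨eta_one, fun m n _ _ h => eta_mult m n h⟩
  · intro p hp
    have hp0 : (p : ℝ) ≠ 0 := Nat.cast_ne_zero.mpr hp.pos.ne'
    refine ⟨?_, ?_, ?_⟩
    · have := eta_prime_pow hp (v := 1) le_rfl
      simpa [etaF_prime hp, etaF_one] using this
    · rw [eta_prime_pow hp (by norm_num : (1:ℕ) ≤ 2),
        etaF_prime_pow hp le_rfl]
      norm_num [etaF_prime hp]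
      field_simp
      ring
    · intro v hv
      obtain ⟨k, rfl⟩ : ∃ k, v = k + 3 := ⟨v - 3, by omega⟩
      rw [eta_prime_pow hp (by omega), etaF_prime_pow hp (by omega),
        (by omega : k + 3 - 1 = k + 2), etaF_prime_pow hp (by omega)]
      field_simp
      ring
end
end

section
/- The series Σ_{j = 0}^∞ λ_{2j}·p^{-j} converges absolutely and equals (1 + 1/p)^{-1} · ( 1 − p·λ_1²/(p+1)² )^{-1}. -/
open scoped BigOperators

noncomputable section

/-- Let `p` be a prime and `(λ_j)` a real sequence with
`λ_0 = 1`, the Hecke recursion `λ_1 λ_j = λ_{j+1} + λ_{j-1}` for `j ≥ 1`, and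
`|λ_1| ≤ 2`. Then `Σ_{j ≥ 0} λ_{2j} p^{-j}` converges absolutely and equals
`(1 + 1/p)⁻¹ (1 - p λ_1²/(p+1)²)⁻¹`. -/
theorem local_symmetric_square_factor (p : ℕ) (hp : p.Prime) (lam : ℕ → ℝ)
    (h0 : lam 0 = 1)
    (hrec : ∀ j : ℕ, 1 ≤ j → lam 1 * lam j = lam (j + 1) + lam (j - 1))
    (hbd : |lam 1| ≤ 2) :
    Summable (fun j : ℕ => lam (2 * j) / (p : ℝ) ^ j) ∧
    ∑' j : ℕ, lam (2 * j) / (p : ℝ) ^ j =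
      (1 + 1 / (p : ℝ))⁻¹ * (1 - p * (lam 1) ^ 2 / ((p : ℝ) + 1) ^ 2)⁻¹ := by
  set a := lam 1 with ha
  set q : ℝ := (p : ℝ) with hq
  have hq2 : (2 : ℝ) ≤ q := by rw [hq]; exact_mod_cast hp.two_le
  have hq0 : (0 : ℝ) < q := by linarith
  have hqne : q ≠ 0 := ne_of_gt hq0
  -- the invariant
  have hinv : ∀ j : ℕ, lam (j+1)^2 - a * lam (j+1) * lam j + lam j ^2 = 1 := by
    intro j
    induction j with
    | zero => rw [h0]; ring
    | succ n ih =>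
      have h' : lam 1 * lam (n+1) = lam (n+2) + lam n := hrec (n+1) (by omega)
      rw [← ha] at h'
      have h2 : lam (n+2) = a * lam (n+1) - lam n := by linarith
      rw [show n+1+1 = n+2 from rfl, h2]
      linear_combination ih
  -- bound |lam j| ≤ j + 1
  have habs : ∀ j : ℕ, |lam j| ≤ (j : ℝ) + 1 := by
    intro j
    induction j with
    | zero => simp [h0]
    | succ n ih =>
      have hX := hinv n
      have h2 : a * lam (n+1) * lam n ≤ 2 * (|lam (n+1)| * |lam n|) := by
        calc a * lam (n+1) * lam n ≤ |a * lam (n+1) * lam n| := le_abs_self _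
          _ = |a| * (|lam (n+1)| * |lam n|) := by rw [abs_mul, abs_mul]; ring
          _ ≤ 2 * (|lam (n+1)| * |lam n|) :=
            mul_le_mul_of_nonneg_right hbd (by positivity)
      have h3 : |lam (n+1)| ≤ |lam n| + 1 := by
        nlinarith [sq_abs (lam (n+1)), sq_abs (lam n), abs_nonneg (lam (n+1)),
          abs_nonneg (lam n), sq_nonneg (|lam (n+1)| - |lam n|)]
      push_cast
      calc |lam (n+1)| ≤ |lam n| + 1 := h3
        _ ≤ ((n:ℝ)+1) + 1 := by linarith
  -- summability
  have hr1 : (0:ℝ) < 1/q := by positivity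
  have hrlt : ‖(1:ℝ)/q‖ < 1 := by
    rw [Real.norm_eq_abs, abs_of_pos hr1, div_lt_one hq0]; linarith
  have hs1 : Summable (fun j : ℕ => (j:ℝ) * (1/q)^j) := by
    simpa using summable_pow_mul_geometric_of_norm_lt_one 1 hrlt
  have hs0 : Summable (fun j : ℕ => ((1:ℝ)/q)^j) :=
    summable_geometric_of_lt_one (le_of_lt hr1) (by rw [div_lt_one hq0]; linarith)
  have hsum : Summable (fun j : ℕ => lam (2*j) / q^j) := by
    apply Summable.of_norm_bounded (g := fun j : ℕ => 2*((j:ℝ)*(1/q)^j) + (1/q)^j)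
      ((hs1.mul_left 2).add hs0)
    intro j
    have h1 : |lam (2*j)| ≤ 2*(j:ℝ) + 1 := by
      have := habs (2*j); push_cast at this; linarith
    have hpq : (0:ℝ) < q^j := pow_pos hq0 j
    rw [Real.norm_eq_abs, abs_div, abs_of_pos hpq]
    have e : ((1:ℝ)/q)^j = 1/q^j := by rw [div_pow, one_pow]
    rw [e]
    rw [div_le_iff₀ hpq] at *
    calc |lam (2*j)| ≤ 2*(j:ℝ)+1 := h1
      _ = (2*((j:ℝ)*(1/q^j)) + 1/q^j) * q^j := by field_simp
  refine ⟨hsum, ?_⟩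
  -- set up shifted sums
  set f : ℕ → ℝ := fun j => lam (2*j) / q^j with hf
  have hsum1 : Summable (fun j => f (j+1)) := (summable_nat_add_iff 1).mpr hsum
  have hsum2 : Summable (fun j => f (j+2)) := (summable_nat_add_iff 2).mpr hsum
  set S := ∑' j, f j with hS
  set T1 := ∑' j, f (j+1) with hT1def
  set T2 := ∑' j, f (j+2) with hT2def
  have e1 : S = f 0 + T1 := Summable.tsum_eq_zero_add hsum
  have e2 : T1 = f 1 + T2 := Summable.tsum_eq_zero_add hsum1
  -- pointwise recursion for f
  have hpt : ∀ j : ℕ, f (j+2) = ((a^2-2)/q) * f (j+1) - (1/q^2) * f j := by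
    intro j
    have r1 : a * lam (2*j+1) = lam (2*j+2) + lam (2*j) := by
      have := hrec (2*j+1) (by omega); simpa using this
    have r2 : a * lam (2*j+2) = lam (2*j+3) + lam (2*j+1) := by
      have := hrec (2*j+2) (by omega); simpa using this
    have r3 : a * lam (2*j+3) = lam (2*j+4) + lam (2*j+2) := by
      have := hrec (2*j+3) (by omega); simpa using this
    have hb : lam (2*j+4) = (a^2-2) * lam (2*j+2) - lam (2*j) := by
      linear_combination (-1) * r3 - a * r2 - r1
    show lam (2*(j+2)) / q^(j+2) = ((a^2-2)/q) * (lam (2*(j+1)) / q^(j+1)) - (1/q^2) * (lam (2*j)/q^j)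
    have e24 : 2*(j+2) = 2*j+4 := by ring
    have e22 : 2*(j+1) = 2*j+2 := by ring
    rw [e24, e22, hb, pow_succ, pow_succ]
    field_simp
    ring
  have hT2 : T2 = ((a^2-2)/q) * T1 - (1/q^2) * S := by
    calc T2 = ∑' j, (((a^2-2)/q) * f (j+1) - (1/q^2) * f j) := tsum_congr hpt
      _ = ((a^2-2)/q) * T1 - (1/q^2) * S := by
        rw [Summable.tsum_sub (hsum1.mul_left _) (hsum.mul_left _), tsum_mul_left, tsum_mul_left]
  -- values
  have hf0 : f 0 = 1 := by simp [hf, h0]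
  have hl2 : lam 2 = a^2 - 1 := by
    have := hrec 1 le_rfl
    rw [h0] at this
    linear_combination -this
  have hf1 : f 1 = (a^2-1)/q := by simp [hf, hl2]
  have hT1S : T1 = S - 1 := by rw [e1, hf0]; ring
  have hkey : S * ((q+1)^2 - a^2*q) = q^2 + q := by
    have h := hT2
    have hT2S : T2 = S - 1 - (a^2-1)/q := by rw [e2, hf1] at hT1S; linarith
    rw [hT2S, hT1S] at h
    field_simp at h
    have h2 : S * ((q+1)^2 - a^2*q) * q^2 = (q^2+q) * q^2 := by linear_combination q^2 * h
    exact mul_right_cancel₀ (pow_ne_zero 2 hqne) h2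
  have ha2 : a^2 ≤ 4 := by nlinarith [sq_abs a, abs_nonneg a]
  have hD : (0:ℝ) < (q+1)^2 - a^2*q := by nlinarith [sq_nonneg (q-1)]
  have hDne : ((q+1)^2 - a^2*q) ≠ 0 := ne_of_gt hD
  have hSval : S = (q^2+q) / ((q+1)^2 - a^2*q) := by
    rw [eq_div_iff hDne]; exact hkey
  have h1ne : q + 1 ≠ 0 := by positivity
  have hEne : (1:ℝ) - q*a^2/(q+1)^2 ≠ 0 := by
    have e : (1:ℝ) - q*a^2/(q+1)^2 = ((q+1)^2 - a^2*q)/(q+1)^2 := by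
      field_simp
    rw [e]
    positivity
  have h11 : (1:ℝ) + 1/q ≠ 0 := by positivity
  show S = (1 + 1/q)⁻¹ * (1 - q * a^2 / (q+1)^2)⁻¹
  have hA : (1 + 1/q)⁻¹ = q / (q+1) := by
    rw [one_add_div hqne, inv_div]
  have hB : (1 - q*a^2/(q+1)^2)⁻¹ = (q+1)^2 / ((q+1)^2 - a^2*q) := by
    rw [show (1:ℝ) - q*a^2/(q+1)^2 = ((q+1)^2 - a^2*q)/(q+1)^2 from by field_simp,
      inv_div]
  rw [hSval, hA, hB, div_mul_div_comm, div_eq_div_iff hDne (by positivity)]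
  ring

end
end
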